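/- For all n ≥ 1, Σ_{σ ∈ Av_n(231,321)} q^{inv σ} = (1+q)^{n-1}, where Av_n(231,321) is the set of permutations of {1,…,n} avoiding both the patterns 231 and 321. -/

import Mathlib

open scoped Classical

/-- `σ` contains the pattern `π`. -/
def permContains {n k : ℕ} (σ : Equiv.Perm (Fin n)) (π : Equiv.Perm (Fin k)) : Prop :=
  ∃ f : Fin k → Fin n, StrictMono f ∧ ∀ i j : Fin k, π i < π j ↔ σ (f i) < σ (f j)

/-- `σ` avoids the pattern `π`. -/
def permAvoids {n k : ℕ} (σ : Equiv.Perm (Fin n)) (π : Equiv.Perm (Fin k)) : Prop :=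
  ¬ permContains σ π

def p123 : Equiv.Perm (Fin 3) := 1
def p132 : Equiv.Perm (Fin 3) := Equiv.swap 1 2
def p213 : Equiv.Perm (Fin 3) := Equiv.swap 0 1
def p231 : Equiv.Perm (Fin 3) := finRotate 3
def p312 : Equiv.Perm (Fin 3) := (finRotate 3)⁻¹
def p321 : Equiv.Perm (Fin 3) := Equiv.swap 0 2

/-- Descent set of a permutation, as a set of (1-based) positions `i` with `a_i > a_{i+1}`. -/
def desSet {n : ℕ} (σ : Equiv.Perm (Fin n)) : Finset ℕ :=
  (Finset.Ico 1 n).filter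
    (fun i => ∀ h : i < n, σ ⟨i, h⟩ < σ ⟨i - 1, Nat.lt_of_le_of_lt (Nat.sub_le i 1) h⟩)

/-- Major index: sum of descent positions. -/
def majIdx {n : ℕ} (σ : Equiv.Perm (Fin n)) : ℕ := ∑ i ∈ desSet σ, i

/-- Number of descents. -/
def desNum {n : ℕ} (σ : Equiv.Perm (Fin n)) : ℕ := (desSet σ).card

/-- Number of inversions. -/
def invNum {n : ℕ} (σ : Equiv.Perm (Fin n)) : ℕ :=
  ((Finset.univ : Finset (Fin n × Fin n)).filter (fun p => p.1 < p.2 ∧ σ p.2 < σ p.1)).card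

open Equiv Equiv.Perm Finset in
def cnt {n : ℕ} (σ : Equiv.Perm (Fin n)) (k : Fin n) : ℕ :=
  (Finset.univ.filter fun i => i < k ∧ σ k < σ i).card

lemma strictMono3 {n : ℕ} (i j k : Fin n) (hij : i < j) (hjk : j < k) :
    StrictMono ![i, j, k] := by
  intro a b hab
  fin_cases a <;> fin_cases b <;>
    simp only [Matrix.cons_val_zero, Matrix.cons_val_one, Matrix.head_cons,
      Matrix.cons_val_two, Matrix.tail_cons, Fin.mk_zero, Fin.mk_one] <;>
    first
      | exact absurd hab (by decide)
      | exact hij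
      | exact hjk
      | exact hij.trans hjk

lemma one_lt_cnt {n : ℕ} (σ : Equiv.Perm (Fin n)) (i j k : Fin n)
    (hij : i < j) (hjk : j < k) (h1 : σ k < σ i) (h2 : σ k < σ j) : 1 < cnt σ k := by
  apply Finset.one_lt_card.mpr
  refine ⟨i, ?_, j, ?_, ne_of_lt hij⟩ <;>
    simp only [Finset.mem_filter, Finset.mem_univ, true_and]
  · exact ⟨hij.trans hjk, h1⟩
  · exact ⟨hjk, h2⟩

lemma avoid_iff {n : ℕ} (σ : Equiv.Perm (Fin n)) :
    (permAvoids σ p231 ∧ permAvoids σ p321) ↔ ∀ k, cnt σ k ≤ 1 := by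
  constructor
  · rintro ⟨h1, h2⟩ k
    by_contra hc
    push_neg at hc
    obtain ⟨i, hi, j, hj, hij⟩ := Finset.one_lt_card.mp hc
    simp only [Finset.mem_filter, Finset.mem_univ, true_and] at hi hj
    have key : ∀ i j : Fin n, i < j → j < k → σ k < σ i → σ k < σ j → False := by
      intro i j hlt hjk hki hkj
      rcases lt_trichotomy (σ i) (σ j) with ho | ho | ho
      · refine h1 ⟨![i, j, k], strictMono3 i j k hlt hjk, ?_⟩
        intro a b
        fin_cases a <;> fin_cases b <;>
          simp only [Matrix.cons_val_zero, Matrix.cons_val_one, Matrix.head_cons,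
            Matrix.cons_val_two, Matrix.tail_cons, Fin.mk_zero, Fin.mk_one] <;>
          constructor <;> intro h <;>
          first
            | decide
            | exact absurd h (by decide)
            | exact ho
            | exact hki
            | exact hkj
            | exact absurd h (asymm ho)
            | exact absurd h (asymm hki)
            | exact absurd h (asymm hkj)
            | exact absurd h (lt_irrefl _)
      · exact absurd (σ.injective ho) (ne_of_lt hlt)
      · refine h2 ⟨![i, j, k], strictMono3 i j k hlt hjk, ?_⟩
        intro a b
        fin_cases a <;> fin_cases b <;>
          simp only [Matrix.cons_val_zero, Matrix.cons_val_one, Matrix.head_cons,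
            Matrix.cons_val_two, Matrix.tail_cons, Fin.mk_zero, Fin.mk_one] <;>
          constructor <;> intro h <;>
          first
            | decide
            | exact absurd h (by decide)
            | exact ho
            | exact hki
            | exact hkj
            | exact absurd h (asymm ho)
            | exact absurd h (asymm hki)
            | exact absurd h (asymm hkj)
            | exact absurd h (lt_irrefl _)
    rcases lt_or_gt_of_ne hij with hlt | hlt
    · exact key i j hlt hj.1 hi.2 hj.2
    · exact key j i hlt hi.1 hj.2 hi.2
  · intro hC
    constructor <;> rintro ⟨f, hf, hiff⟩
    · have h1 : σ (f 2) < σ (f 0) := (hiff 2 0).mp (by decide)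
      have h2 : σ (f 2) < σ (f 1) := (hiff 2 1).mp (by decide)
      exact absurd (hC (f 2))
        (not_le.mpr (one_lt_cnt σ (f 0) (f 1) (f 2) (hf (by decide)) (hf (by decide)) h1 h2))
    · have h1 : σ (f 2) < σ (f 0) := (hiff 2 0).mp (by decide)
      have h2 : σ (f 2) < σ (f 1) := (hiff 2 1).mp (by decide)
      exact absurd (hC (f 2))
        (not_le.mpr (one_lt_cnt σ (f 0) (f 1) (f 2) (hf (by decide)) (hf (by decide)) h1 h2))

def E {n : ℕ} (b : Bool) (σ : Equiv.Perm (Fin (n+1))) : Equiv.Perm (Fin (n+2)) :=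
  Equiv.Perm.decomposeFin.symm (0, σ) * (if b then Equiv.swap 0 1 else 1)

lemma E_false_zero {n : ℕ} (σ : Equiv.Perm (Fin (n+1))) : E false σ 0 = 0 := by
  simp [E, Equiv.Perm.decomposeFin_symm_apply_zero]

lemma E_false_succ {n : ℕ} (σ : Equiv.Perm (Fin (n+1))) (x : Fin (n+1)) :
    E false σ x.succ = (σ x).succ := by
  simp [E, Equiv.Perm.decomposeFin_symm_apply_succ]

lemma E_true_apply {n : ℕ} (σ : Equiv.Perm (Fin (n+1))) (x : Fin (n+2)) :
    E true σ x = E false σ (Equiv.swap 0 1 x) := by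
  simp [E]

lemma E_true_zero {n : ℕ} (σ : Equiv.Perm (Fin (n+1))) : E true σ 0 = (σ 0).succ := by
  rw [E_true_apply, Equiv.swap_apply_left, ← Fin.succ_zero_eq_one, E_false_succ]

lemma E_true_one {n : ℕ} (σ : Equiv.Perm (Fin (n+1))) : E true σ 1 = 0 := by
  rw [E_true_apply, Equiv.swap_apply_right, E_false_zero]

lemma E_true_succ {n : ℕ} (σ : Equiv.Perm (Fin (n+1))) (x : Fin (n+1)) (hx : x ≠ 0) :
    E true σ x.succ = (σ x).succ := by
  have h1 : x.succ ≠ 1 := by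
    rw [← Fin.succ_zero_eq_one]
    exact fun h => hx (Fin.succ_injective _ h)
  rw [E_true_apply, Equiv.swap_apply_of_ne_of_ne (Fin.succ_ne_zero x) h1, E_false_succ]

lemma invNum_E_false {n : ℕ} (σ : Equiv.Perm (Fin (n+1))) : invNum (E false σ) = invNum σ := by
  unfold invNum
  apply (Finset.card_bij (fun p _ => (p.1.succ, p.2.succ)) ?_ ?_ ?_).symm
  · rintro ⟨a, b⟩ hab
    simp only [Finset.mem_filter, Finset.mem_univ, true_and] at hab ⊢
    exact ⟨Fin.succ_lt_succ_iff.mpr hab.1, by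
      rw [E_false_succ, E_false_succ]; exact Fin.succ_lt_succ_iff.mpr hab.2⟩
  · rintro ⟨a, b⟩ _ ⟨c, d⟩ _ h
    simp only [Prod.mk.injEq] at h
    exact Prod.ext (Fin.succ_injective _ h.1) (Fin.succ_injective _ h.2)
  · rintro ⟨a, b⟩ hab
    simp only [Finset.mem_filter, Finset.mem_univ, true_and] at hab
    rcases Fin.eq_zero_or_eq_succ a with rfl | ⟨a', rfl⟩
    · rw [E_false_zero] at hab
      exact absurd hab.2 (Fin.not_lt_zero _)
    rcases Fin.eq_zero_or_eq_succ b with rfl | ⟨b', rfl⟩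
    · exact absurd hab.1 (Fin.not_lt_zero _)
    refine ⟨(a', b'), ?_, rfl⟩
    simp only [Finset.mem_filter, Finset.mem_univ, true_and]
    rw [E_false_succ, E_false_succ] at hab
    exact ⟨Fin.succ_lt_succ_iff.mp hab.1, Fin.succ_lt_succ_iff.mp hab.2⟩

lemma swap01_lt {n : ℕ} {a b : Fin (n+2)} (hab : a < b) (hne : ¬(a = 0 ∧ b = 1)) :
    Equiv.swap 0 1 a < Equiv.swap 0 1 b := by
  rw [Equiv.swap_apply_def, Equiv.swap_apply_def]
  split_ifs <;>
    simp only [Fin.lt_def, Fin.ext_iff, Fin.val_zero, Fin.val_one, not_and] at * <;> omega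

lemma invNum_mul_swap {n : ℕ} (ρ : Equiv.Perm (Fin (n+2))) (h01 : ρ 0 < ρ 1) :
    invNum (ρ * Equiv.swap 0 1) = invNum ρ + 1 := by
  unfold invNum
  set s : Equiv.Perm (Fin (n+2)) := Equiv.swap 0 1 with hs
  have sapp : ∀ x, (ρ * s) x = ρ (s x) := fun x => rfl
  have sinv : ∀ x, s (s x) = x := fun x => Equiv.swap_apply_self _ _ x
  have hset : (Finset.univ.filter (fun p : Fin (n+2) × Fin (n+2) => p.1 < p.2 ∧ (ρ * s) p.2 < (ρ * s) p.1))
      = insert ((0 : Fin (n+2)), (1 : Fin (n+2)))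
        ((Finset.univ.filter (fun p : Fin (n+2) × Fin (n+2) => p.1 < p.2 ∧ ρ p.2 < ρ p.1)).image
          (fun p => (s p.1, s p.2))) := by
    ext ⟨a, b⟩
    simp only [Finset.mem_filter, Finset.mem_univ, true_and, Finset.mem_insert,
      Finset.mem_image, Prod.mk.injEq, sapp]
    constructor
    · rintro ⟨hab, hord⟩
      by_cases hab01 : a = 0 ∧ b = 1
      · exact Or.inl ⟨hab01.1, hab01.2⟩
      · refine Or.inr ⟨(s a, s b), ⟨swap01_lt hab hab01, hord⟩, sinv a, sinv b⟩
    · rintro (⟨rfl, rfl⟩ | ⟨⟨x, y⟩, ⟨hxy, hord⟩, rfl, rfl⟩)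
      · refine ⟨by simp [Fin.lt_def], ?_⟩
        rw [hs]
        rwa [Equiv.swap_apply_right, Equiv.swap_apply_left]
      · refine ⟨?_, by rwa [sinv, sinv]⟩
        refine swap01_lt hxy fun h => ?_
        rw [h.1, h.2] at hord
        exact absurd h01 (asymm hord)
  rw [hset, Finset.card_insert_of_notMem, Finset.card_image_of_injective]
  · intro p p' hp
    simp only [Prod.mk.injEq] at hp
    exact Prod.ext (s.injective hp.1) (s.injective hp.2)
  · simp only [Finset.mem_image, Finset.mem_filter, Finset.mem_univ, true_and, Prod.mk.injEq,
      not_exists, not_and]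
    rintro ⟨x, y⟩ ⟨hxy, _⟩ hx hy
    have : x = s 0 := by rw [← hx, sinv]
    have hy' : y = s 1 := by rw [← hy, sinv]
    rw [hs] at this hy'
    rw [Equiv.swap_apply_left] at this
    rw [Equiv.swap_apply_right] at hy'
    subst this; subst hy'
    exact absurd hxy (by simp [Fin.lt_def])

lemma invNum_E_true {n : ℕ} (σ : Equiv.Perm (Fin (n+1))) :
    invNum (E true σ) = invNum σ + 1 := by
  have : E true σ = E false σ * Equiv.swap 0 1 := by
    simp [E]
  rw [this, invNum_mul_swap, invNum_E_false]
  rw [show (1 : Fin (n+2)) = (0 : Fin (n+1)).succ from (Fin.succ_zero_eq_one).symm,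
    E_false_zero, E_false_succ]
  exact Fin.succ_pos _

lemma cnt_zero {n : ℕ} (σ : Equiv.Perm (Fin (n+1))) : cnt σ 0 = 0 := by
  unfold cnt
  rw [Finset.card_eq_zero]
  ext i
  simp [Fin.not_lt_zero]

lemma cnt_E_false_succ {n : ℕ} (σ : Equiv.Perm (Fin (n+1))) (k : Fin (n+1)) :
    cnt (E false σ) k.succ = cnt σ k := by
  unfold cnt
  apply (Finset.card_bij (fun i _ => i.succ) ?_ ?_ ?_).symm
  · intro i hi
    simp only [Finset.mem_filter, Finset.mem_univ, true_and] at hi ⊢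
    rw [E_false_succ, E_false_succ]
    exact ⟨Fin.succ_lt_succ_iff.mpr hi.1, Fin.succ_lt_succ_iff.mpr hi.2⟩
  · intro a _ b _ h
    exact Fin.succ_injective _ h
  · intro a ha
    simp only [Finset.mem_filter, Finset.mem_univ, true_and] at ha
    rcases Fin.eq_zero_or_eq_succ a with rfl | ⟨a', rfl⟩
    · rw [E_false_zero] at ha
      exact absurd ha.2 (Fin.not_lt_zero _)
    refine ⟨a', ?_, rfl⟩
    simp only [Finset.mem_filter, Finset.mem_univ, true_and]
    rw [E_false_succ, E_false_succ] at ha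
    exact ⟨Fin.succ_lt_succ_iff.mp ha.1, Fin.succ_lt_succ_iff.mp ha.2⟩

lemma cnt_E_true_one {n : ℕ} (σ : Equiv.Perm (Fin (n+1))) : cnt (E true σ) 1 = 1 := by
  unfold cnt
  rw [Finset.card_eq_one]
  refine ⟨0, ?_⟩
  ext i
  simp only [Finset.mem_filter, Finset.mem_univ, true_and, Finset.mem_singleton]
  constructor
  · rintro ⟨hi, _⟩
    exact (Fin.lt_one_iff _).mp hi
  · rintro rfl
    rw [E_true_one, E_true_zero]
    exact ⟨by simp [Fin.lt_def], Fin.succ_pos _⟩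

lemma cnt_E_true_succ {n : ℕ} (σ : Equiv.Perm (Fin (n+1))) (k : Fin (n+1)) (hk : k ≠ 0) :
    cnt (E true σ) k.succ = cnt σ k := by
  unfold cnt
  apply (Finset.card_bij (fun i _ => if i = 0 then 0 else i.succ) ?_ ?_ ?_).symm
  · intro i hi
    simp only [Finset.mem_filter, Finset.mem_univ, true_and] at hi ⊢
    rw [E_true_succ σ k hk]
    split_ifs with h
    · subst h
      rw [E_true_zero]
      exact ⟨Fin.succ_pos _, Fin.succ_lt_succ_iff.mpr hi.2⟩
    · rw [E_true_succ σ i h]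
      exact ⟨Fin.succ_lt_succ_iff.mpr hi.1, Fin.succ_lt_succ_iff.mpr hi.2⟩
  · intro a _ b _ h
    split_ifs at h with h1 h2 h2
    · rw [h1, h2]
    · exact absurd h.symm (Fin.succ_ne_zero b)
    · exact absurd h (Fin.succ_ne_zero a)
    · exact Fin.succ_injective _ h
  · intro a ha
    simp only [Finset.mem_filter, Finset.mem_univ, true_and] at ha
    rw [E_true_succ σ k hk] at ha
    rcases Fin.eq_zero_or_eq_succ a with rfl | ⟨a', rfl⟩
    · refine ⟨0, ?_, if_pos rfl⟩
      simp only [Finset.mem_filter, Finset.mem_univ, true_and]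
      rw [E_true_zero] at ha
      exact ⟨Fin.pos_of_ne_zero hk, Fin.succ_lt_succ_iff.mp ha.2⟩
    by_cases ha0 : a' = 0
    · subst ha0
      rw [Fin.succ_zero_eq_one, E_true_one] at ha
      exact absurd ha.2 (Fin.not_lt_zero _)
    refine ⟨a', ?_, if_neg ha0⟩
    simp only [Finset.mem_filter, Finset.mem_univ, true_and]
    rw [E_true_succ σ a' ha0] at ha
    exact ⟨Fin.succ_lt_succ_iff.mp ha.1, Fin.succ_lt_succ_iff.mp ha.2⟩

lemma C_E_iff {n : ℕ} (b : Bool) (σ : Equiv.Perm (Fin (n+1))) :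
    (∀ k, cnt (E b σ) k ≤ 1) ↔ (∀ k, cnt σ k ≤ 1) := by
  cases b
  · constructor
    · intro h k
      rw [← cnt_E_false_succ σ k]
      exact h k.succ
    · intro h k
      rcases Fin.eq_zero_or_eq_succ k with rfl | ⟨k', rfl⟩
      · rw [cnt_zero]; exact Nat.zero_le 1
      · rw [cnt_E_false_succ]; exact h k'
  · constructor
    · intro h k
      by_cases hk : k = 0
      · subst hk; rw [cnt_zero]; exact Nat.zero_le 1
      · rw [← cnt_E_true_succ σ k hk]
        exact h k.succ
    · intro h k
      rcases Fin.eq_zero_or_eq_succ k with rfl | ⟨k', rfl⟩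
      · rw [cnt_zero]; exact Nat.zero_le 1
      by_cases hk : k' = 0
      · subst hk
        rw [Fin.succ_zero_eq_one, cnt_E_true_one]
      · rw [cnt_E_true_succ σ k' hk]; exact h k'

lemma E_false_decomp {n : ℕ} (τ : Equiv.Perm (Fin (n+2))) (h0 : τ 0 = 0) :
    ∃ σ', E false σ' = τ := by
  have h := Equiv.symm_apply_apply Equiv.Perm.decomposeFin τ
  rcases hdf : Equiv.Perm.decomposeFin τ with ⟨p, σ'⟩
  rw [hdf] at h
  have hp : p = 0 := by
    have := Equiv.Perm.decomposeFin_symm_apply_zero p σ'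
    rw [h] at this
    rw [← this, h0]
  refine ⟨σ', ?_⟩
  rw [E, if_neg (by simp), mul_one, ← hp, h]

lemma E_surj {n : ℕ} (σ : Equiv.Perm (Fin (n+2))) (hC : ∀ k, cnt σ k ≤ 1) :
    ∃ b σ', E b σ' = σ := by
  have hzero : σ 0 = 0 ∨ σ 1 = 0 := by
    set j := σ.symm 0 with hj
    have hσj : σ j = 0 := Equiv.apply_symm_apply σ 0
    by_contra hcon
    push_neg at hcon
    have hj0 : j ≠ 0 := fun h => hcon.1 (h ▸ hσj)
    have hj1 : j ≠ 1 := fun h => hcon.2 (h ▸ hσj)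
    have h2j : (1 : Fin (n+2)) < j := by
      rw [Fin.lt_def]
      rcases Nat.lt_or_ge j.val 2 with h | h
      · interval_cases hv : j.val
        · exact absurd (Fin.ext hv) hj0
        · exact absurd (Fin.ext hv) hj1
      · exact Nat.lt_of_lt_of_le (by norm_num) h
    have h0j : (0 : Fin (n+2)) < j := lt_trans (by simp [Fin.lt_def]) h2j
    have : 1 < cnt σ j := by
      apply Finset.one_lt_card.mpr
      refine ⟨0, ?_, 1, ?_, by simp [Fin.ext_iff]⟩ <;>
        simp only [Finset.mem_filter, Finset.mem_univ, true_and]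
      · refine ⟨h0j, ?_⟩
        rw [hσj]
        exact Fin.pos_of_ne_zero (fun h => hj0 (σ.injective (h.trans hσj.symm)).symm)
      · refine ⟨h2j, ?_⟩
        rw [hσj]
        exact Fin.pos_of_ne_zero (fun h => hj1 (σ.injective (h.trans hσj.symm)).symm)
    exact absurd (hC j) (not_le.mpr this)
  rcases hzero with h0 | h1
  · obtain ⟨σ', hσ'⟩ := E_false_decomp σ h0
    exact ⟨false, σ', hσ'⟩
  · have h0 : (σ * Equiv.swap (0 : Fin (n+2)) 1) 0 = 0 := by
      rw [Equiv.Perm.mul_apply, Equiv.swap_apply_left]; exact h1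
    obtain ⟨σ', hσ'⟩ := E_false_decomp (σ * Equiv.swap (0 : Fin (n+2)) 1) h0
    refine ⟨true, σ', ?_⟩
    have : E true σ' = E false σ' * Equiv.swap 0 1 := by simp [E]
    rw [this, hσ', mul_assoc, Equiv.swap_mul_self, mul_one]

lemma E_inj {n : ℕ} (b b' : Bool) (σ σ' : Equiv.Perm (Fin (n+1)))
    (h : E b σ = E b' σ') : b = b' ∧ σ = σ' := by
  have hb : b = b' := by
    cases b <;> cases b' <;> try rfl
    · have h1 := congrFun (congrArg (fun e => e.toFun) h) 1
      rw [show ((E false σ).toFun 1 = (E false σ) 1) from rfl] at h1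
      rw [show ((E true σ').toFun 1 = (E true σ') 1) from rfl] at h1
      rw [E_true_one, ← Fin.succ_zero_eq_one, E_false_succ] at h1
      exact absurd h1 (Fin.succ_ne_zero _)
    · have h1 := congrFun (congrArg (fun e => e.toFun) h) 1
      rw [show ((E true σ).toFun 1 = (E true σ) 1) from rfl] at h1
      rw [show ((E false σ').toFun 1 = (E false σ') 1) from rfl] at h1
      rw [E_true_one, ← Fin.succ_zero_eq_one, E_false_succ] at h1
      exact absurd h1.symm (Fin.succ_ne_zero _)
  subst hb
  refine ⟨rfl, ?_⟩
  have h2 : Equiv.Perm.decomposeFin.symm (0, σ) = Equiv.Perm.decomposeFin.symm (0, σ') := by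
    unfold E at h
    exact mul_right_cancel h
  have h3 := Equiv.Perm.decomposeFin.symm.injective h2
  exact (Prod.mk.injEq _ _ _ _ ▸ h3).2

lemma invNum_fin_one (σ : Equiv.Perm (Fin 1)) : invNum σ = 0 := by
  unfold invNum
  rw [Finset.card_eq_zero]
  ext ⟨a, b⟩
  simp only [Finset.mem_filter, Finset.mem_univ, true_and, Finset.notMem_empty, iff_false,
    not_and]
  intro h
  exact absurd (Subsingleton.elim a b ▸ h) (lt_irrefl _)

lemma sum_C (q : ℚ) : ∀ n : ℕ,
    (∑ σ ∈ Finset.univ.filter (fun σ : Equiv.Perm (Fin (n+1)) => ∀ k, cnt σ k ≤ 1),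
      q ^ invNum σ) = (1 + q) ^ n := by
  intro n
  induction n with
  | zero =>
    have huniv : (Finset.univ.filter (fun σ : Equiv.Perm (Fin 1) => ∀ k, cnt σ k ≤ 1))
        = {(1 : Equiv.Perm (Fin 1))} := by
      ext σ
      simp only [Finset.mem_filter, Finset.mem_univ, true_and, Finset.mem_singleton]
      constructor
      · intro _; exact Subsingleton.elim σ 1
      · intro _ k
        have : cnt σ k = 0 := by
          unfold cnt
          rw [Finset.card_eq_zero]
          ext i
          simp only [Finset.mem_filter, Finset.mem_univ, true_and, Finset.notMem_empty,
            iff_false, not_and]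
          intro h
          exact absurd (Subsingleton.elim i k ▸ h) (lt_irrefl _)
        omega
    rw [huniv, Finset.sum_singleton, invNum_fin_one, pow_zero, pow_zero]
  | succ n ih =>
    have hbij : (∑ σ ∈ Finset.univ.filter
          (fun σ : Equiv.Perm (Fin (n+2)) => ∀ k, cnt σ k ≤ 1), q ^ invNum σ)
        = ∑ p ∈ (Finset.univ : Finset Bool) ×ˢ
            (Finset.univ.filter (fun σ : Equiv.Perm (Fin (n+1)) => ∀ k, cnt σ k ≤ 1)),
            q ^ invNum (E p.1 p.2) := by
      apply (Finset.sum_bij (fun p _ => E p.1 p.2) ?_ ?_ ?_ ?_).symm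
      · rintro ⟨b, σ⟩ hp
        simp only [Finset.mem_product, Finset.mem_filter, Finset.mem_univ, true_and] at hp ⊢
        exact (C_E_iff b σ).mpr hp
      · rintro ⟨b, σ⟩ _ ⟨b', σ'⟩ _ h
        have := E_inj b b' σ σ' h
        rw [Prod.mk.injEq]
        exact this
      · intro σ hσ
        simp only [Finset.mem_filter, Finset.mem_univ, true_and] at hσ
        obtain ⟨b, σ', h⟩ := E_surj σ hσ
        refine ⟨(b, σ'), ?_, h⟩
        simp only [Finset.mem_product, Finset.mem_filter, Finset.mem_univ, true_and]
        exact (C_E_iff b σ').mp (h ▸ hσ)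
      · intro p _
        rfl
    rw [hbij, Finset.sum_product, Fintype.sum_bool]
    have h1 : ∀ σ : Equiv.Perm (Fin (n+1)), q ^ invNum (E true σ) = q * q ^ invNum σ := by
      intro σ
      rw [invNum_E_true, pow_succ]
      ring
    have h2 : ∀ σ : Equiv.Perm (Fin (n+1)), q ^ invNum (E false σ) = q ^ invNum σ := by
      intro σ
      rw [invNum_E_false]
    simp only [h1, h2]
    rw [← Finset.mul_sum, ih, pow_succ]
    ring

theorem inv_231_321 (n : ℕ) (hn : 1 ≤ n) (q : ℚ) :
    ∑ σ ∈ Finset.univ.filter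
        (fun σ : Equiv.Perm (Fin n) => permAvoids σ p231 ∧ permAvoids σ p321),
      q ^ invNum σ = (1 + q) ^ (n - 1) := by
  cases n with
  | zero => exact absurd hn (by norm_num)
  | succ m =>
    rw [Finset.filter_congr (fun σ _ => avoid_iff σ)]
    simpa using sum_C q m
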